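/- Let C be a reduced combinatorial code on n neurons and let i ∈ [n]. Define, for c ∈ C, g(c) = (c ∖ {i}) ∪ ⋃ { √[C]({i,j}) : j ∈ [n], {i,j} ⊆ c, tk_C({i,j}) ≠ tk_C({i}) } (this is f_i^⊤(f_i(c)) for the i-th covering map f_i). Then √[C]{i} is not in the image of g; that is, g(c) ≠ √[C]{i} for every c ∈ C. -/
import Mathlib


/-- The trunk of `τ` in the code `C`: all codewords containing `τ`. -/
def trunk {n : ℕ} (C : Finset (Finset (Fin n))) (τ : Finset (Fin n)) :
    Finset (Finset (Fin n)) :=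
  C.filter (fun σ => τ ⊆ σ)

/-- The root of a family of subsets: the intersection of all its members. -/
def root {n : ℕ} (S : Finset (Finset (Fin n))) : Finset (Fin n) :=
  S.inf id

/-- The root of `τ` relative to `C`. -/
def rootRel {n : ℕ} (C : Finset (Finset (Fin n))) (τ : Finset (Fin n)) :
    Finset (Fin n) :=
  root (trunk C τ)

/-- A code is reduced if it has no trivial neurons (empty trunks) and no
redundant neurons. -/
def Reduced {n : ℕ} (C : Finset (Finset (Fin n))) : Prop :=
  (∀ i : Fin n, (trunk C {i}).Nonempty) ∧
    ∀ i : Fin n, ¬ ∃ σ : Finset (Fin n), i ∉ σ ∧ trunk C {i} = trunk C σ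

/-- The composite `f_i^⊤ ∘ f_i` of the `i`-th covering map with its canonical
adjoint: `g(c) = (c ∖ {i}) ∪ ⋃ {√[C]({i,j}) : {i,j} ⊆ c, tk_C({i,j}) ≠ tk_C({i})}`. -/
def coverRoundTrip {n : ℕ} (C : Finset (Finset (Fin n))) (i : Fin n)
    (c : Finset (Fin n)) : Finset (Fin n) :=
  c.erase i ∪
    (Finset.univ.filter (fun j : Fin n =>
        ({i, j} : Finset (Fin n)) ⊆ c ∧ trunk C {i, j} ≠ trunk C {i})).sup
      (fun j => rootRel C {i, j})

/-- For a reduced code `C` and neuron `i`, the root `√[C]{i}` is not in the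
image of `f_i^⊤ ∘ f_i`. -/
theorem rootRel_not_in_image_of_coverRoundTrip (n : ℕ)
    (C : Finset (Finset (Fin n))) (i : Fin n) (hC : Reduced C) :
    ∀ c ∈ C, coverRoundTrip C i c ≠ rootRel C {i} := by
  intro c hc heq
  -- i belongs to rootRel C {i}
  have hir : i ∈ rootRel C {i} := by
    rw [rootRel, root, Finset.mem_inf]
    intro σ hσ
    rw [trunk, Finset.mem_filter] at hσ
    exact hσ.2 (Finset.mem_singleton_self i)
  rw [← heq, coverRoundTrip, Finset.mem_union] at hir
  rcases hir with h | h
  · exact (Finset.notMem_erase i c) h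
  · rw [Finset.mem_sup] at h
    obtain ⟨j, hj, -⟩ := h
    rw [Finset.mem_filter] at hj
    obtain ⟨-, hsub, hne⟩ := hj
    -- j ≠ i, since otherwise {i,j} = {i}
    have hji : j ≠ i := by
      rintro rfl
      exact hne (by rw [Finset.pair_eq_singleton])
    -- j ∈ c, hence j ∈ c.erase i ⊆ coverRoundTrip = rootRel C {i}
    have hjc : j ∈ c := hsub (by simp)
    have hjr : j ∈ rootRel C {i} := by
      rw [← heq, coverRoundTrip, Finset.mem_union]
      exact Or.inl (Finset.mem_erase.mpr ⟨hji, hjc⟩)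
    -- so every codeword containing i contains j
    have hall : ∀ σ ∈ C, i ∈ σ → j ∈ σ := by
      intro σ hσ hiσ
      rw [rootRel, root, Finset.mem_inf] at hjr
      have : σ ∈ trunk C {i} := by
        rw [trunk, Finset.mem_filter]
        exact ⟨hσ, Finset.singleton_subset_iff.mpr hiσ⟩
      exact hjr σ this
    -- hence trunk C {i,j} = trunk C {i}, contradiction
    apply hne
    rw [trunk, trunk]
    apply Finset.filter_congr
    intro σ hσ
    simp only [Finset.insert_subset_iff, Finset.singleton_subset_iff,
      eq_iff_iff]
    constructor
    · rintro ⟨h1, -⟩; exact h1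
    · intro h1; exact ⟨h1, hall σ hσ h1⟩
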